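/- Let Γ be a circle with n marked points in cyclic order partitioning it into n arcs, with side disks ω₁, ..., ω_n labeled in cyclic order. Suppose ω_i and ω_j intersect (i ≠ j). Then every side disk whose arc lies strictly between arc i and arc j (in clockwise order) is disjoint from every side disk whose arc lies strictly between arc j and arc i. -/

import Mathlib

open EuclideanGeometry Metric Real

/-- The point at angle `θ` on the circle centered at `O` with radius `r`
in the Euclidean plane. -/
noncomputable def circlePt (O : EuclideanSpace ℝ (Fin 2)) (r θ : ℝ) :
    EuclideanSpace ℝ (Fin 2) :=
  O + r • (WithLp.equiv 2 (Fin 2 → ℝ)).symm ![Real.cos θ, Real.sin θ]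

/-- The side disk of the arc from angle `a` to angle `b` (traversed in increasing angle)
of the circle centered at `O` with radius `r`: the closed disk centered at the midpoint
of the arc whose boundary passes through the two endpoints of the arc. -/
noncomputable def sideDisk (O : EuclideanSpace ℝ (Fin 2)) (r a b : ℝ) :
    Set (EuclideanSpace ℝ (Fin 2)) :=
  Metric.closedBall (circlePt O r ((a + b) / 2))
    (dist (circlePt O r ((a + b) / 2)) (circlePt O r a))

private lemma sin_two_aux (x y : ℝ) :
    sin (2*x) + sin (2*y) = sin (2*x + 2*y) + 4 * sin x * sin y * sin (x+y) := by
  have hx := sin_sq_add_cos_sq x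
  have hy := sin_sq_add_cos_sq y
  rw [show 2*x+2*y = 2*(x+y) by ring, sin_two_mul, sin_two_mul, sin_two_mul, sin_add, cos_add]
  linear_combination (-2*sin x*cos x) * hy + (-2*sin y*cos y) * hx

private lemma sin_add_sin_id (a b : ℝ) :
    sin a + sin b = sin (a+b) + 4 * sin (a/2) * sin (b/2) * sin ((a+b)/2) := by
  have h := sin_two_aux (a/2) (b/2)
  rw [show 2*(a/2) = a by ring, show 2*(b/2) = b by ring, show a/2 + b/2 = (a+b)/2 by ring] at h
  exact h

private lemma sin_shift (X w : ℝ) : sin (X + 2*w) = sin X + 2 * cos (X + w) * sin w := by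
  have h1 := sin_add (X+w) w
  have h2 := sin_sub (X+w) w
  rw [show X + w + w = X + 2*w by ring] at h1
  rw [show X + w - w = X by ring] at h2
  linarith

private lemma keyStep {a b p q : ℝ} (ha : 0 < a) (hb : 0 < b) (hp : 0 < p) (hq : 0 < q)
    (hsum : a + b + p + q ≤ π/2) (h1 : sin (a+b+2*p) ≤ sin a + sin b) :
    sin p * sin q ≤ 2 * sin (a/2) * sin (b/2) * sin ((a+b)/2) := by
  have hpi : 0 < π := pi_pos
  have hcos : sin q ≤ cos (a+b+p) := by
    have h := cos_le_cos_of_nonneg_of_le_pi (by linarith : (0:ℝ) ≤ a+b+p)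
      (by linarith : π/2 - q ≤ π) (by linarith : a+b+p ≤ π/2 - q)
    rwa [cos_pi_div_two_sub] at h
  have hsp : 0 < sin p := sin_pos_of_pos_of_lt_pi hp (by linarith)
  have hmul : sin q * sin p ≤ cos (a+b+p) * sin p :=
    mul_le_mul_of_nonneg_right hcos hsp.le
  have hI1 := sin_add_sin_id a b
  have hI2 := sin_shift (a+b) p
  linarith [hmul, hI1, hI2, h1]


private lemma algFinal {sA cA sB cB sP cP sQ cQ u v : ℝ}
    (hsA : 0 < sA) (hsB : 0 < sB) (hsP : 0 < sP) (hsQ : 0 < sQ)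
    (hu : 0 < u) (hv : 0 < v)
    (hcA : Real.sqrt 2 / 2 < cA) (hcB : Real.sqrt 2 / 2 < cB)
    (hcP : Real.sqrt 2 / 2 < cP) (hcQ : Real.sqrt 2 / 2 < cQ)
    (hu2 : u < Real.sqrt 2 / 2) (hv2 : v < Real.sqrt 2 / 2)
    (e1 : 2 * sP * cP * (2 * sQ * cQ) ≤ 2 * sA * sB * u)
    (e2 : 2 * sA * cA * (2 * sB * cB) ≤ 2 * sP * sQ * v) : False := by
  have s2 : (Real.sqrt 2 / 2)^2 = 1/2 := by
    rw [div_pow, Real.sq_sqrt (by norm_num : (0:ℝ) ≤ 2)]; norm_num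
  have hs2pos : 0 < Real.sqrt 2 / 2 := by positivity
  have hcA0 : 0 < cA := hs2pos.trans hcA
  have hcB0 : 0 < cB := hs2pos.trans hcB
  have hcP0 : 0 < cP := hs2pos.trans hcP
  have hcQ0 : 0 < cQ := hs2pos.trans hcQ
  have hnn1 : (0:ℝ) ≤ 2 * sA * cA * (2 * sB * cB) := by positivity
  have hnn2 : (0:ℝ) ≤ 2 * sA * sB * u := by positivity
  have hmul := mul_le_mul e1 e2 hnn1 hnn2
  have hS : 0 < sA * sB * (sP * sQ) := by positivity
  have h' : (sA * sB * (sP * sQ)) * (4*(cA*cB*(cP*cQ))) ≤ (sA * sB * (sP * sQ)) * (u*v) := by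
    nlinarith [hmul]
  have key : 4*(cA*cB*(cP*cQ)) ≤ u*v := le_of_mul_le_mul_left h' hS
  have h12 : 1/2 < cA*cB := by nlinarith
  have h34 : 1/2 < cP*cQ := by nlinarith
  have huv : u*v < 1/2 := by nlinarith
  nlinarith [key, h12, h34, huv]

private lemma keyM {a b p q : ℝ} (ha : 0 < a) (hb : 0 < b) (hp : 0 < p) (hq : 0 < q)
    (hsum : a + b + p + q ≤ π/2) (h1 : sin (a+b+2*p) ≤ sin a + sin b)
    (h2 : sin (p+q+2*a) ≤ sin p + sin q) : False := by
  have hpi : 0 < π := pi_pos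
  have e1 := keyStep ha hb hp hq hsum h1
  have e2 := keyStep hp hq ha hb (by linarith) h2
  have sa : sin a = 2 * sin (a/2) * cos (a/2) := by
    have := sin_two_mul (a/2); rwa [show 2*(a/2) = a by ring] at this
  have sb : sin b = 2 * sin (b/2) * cos (b/2) := by
    have := sin_two_mul (b/2); rwa [show 2*(b/2) = b by ring] at this
  have sp : sin p = 2 * sin (p/2) * cos (p/2) := by
    have := sin_two_mul (p/2); rwa [show 2*(p/2) = p by ring] at this
  have sq' : sin q = 2 * sin (q/2) * cos (q/2) := by
    have := sin_two_mul (q/2); rwa [show 2*(q/2) = q by ring] at this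
  rw [sp, sq'] at e1
  rw [sa, sb] at e2
  have hsA : 0 < sin (a/2) := sin_pos_of_pos_of_lt_pi (by linarith) (by linarith)
  have hsB : 0 < sin (b/2) := sin_pos_of_pos_of_lt_pi (by linarith) (by linarith)
  have hsP : 0 < sin (p/2) := sin_pos_of_pos_of_lt_pi (by linarith) (by linarith)
  have hsQ : 0 < sin (q/2) := sin_pos_of_pos_of_lt_pi (by linarith) (by linarith)
  have hu : 0 < sin ((a+b)/2) := sin_pos_of_pos_of_lt_pi (by linarith) (by linarith)
  have hv : 0 < sin ((p+q)/2) := sin_pos_of_pos_of_lt_pi (by linarith) (by linarith)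
  have hcA : Real.sqrt 2 / 2 < cos (a/2) := by
    have := cos_lt_cos_of_nonneg_of_le_pi (by linarith : (0:ℝ) ≤ a/2)
      (by linarith : π/4 ≤ π) (by linarith : a/2 < π/4)
    rwa [cos_pi_div_four] at this
  have hcB : Real.sqrt 2 / 2 < cos (b/2) := by
    have := cos_lt_cos_of_nonneg_of_le_pi (by linarith : (0:ℝ) ≤ b/2)
      (by linarith : π/4 ≤ π) (by linarith : b/2 < π/4)
    rwa [cos_pi_div_four] at this
  have hcP : Real.sqrt 2 / 2 < cos (p/2) := by
    have := cos_lt_cos_of_nonneg_of_le_pi (by linarith : (0:ℝ) ≤ p/2)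
      (by linarith : π/4 ≤ π) (by linarith : p/2 < π/4)
    rwa [cos_pi_div_four] at this
  have hcQ : Real.sqrt 2 / 2 < cos (q/2) := by
    have := cos_lt_cos_of_nonneg_of_le_pi (by linarith : (0:ℝ) ≤ q/2)
      (by linarith : π/4 ≤ π) (by linarith : q/2 < π/4)
    rwa [cos_pi_div_four] at this
  have hmem1 : (a+b)/2 ∈ Set.Icc (-(π/2)) (π/2) := Set.mem_Icc.mpr ⟨by linarith, by linarith⟩
  have hmem2 : (p+q)/2 ∈ Set.Icc (-(π/2)) (π/2) := Set.mem_Icc.mpr ⟨by linarith, by linarith⟩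
  have hmem4 : π/4 ∈ Set.Icc (-(π/2)) (π/2) := Set.mem_Icc.mpr ⟨by linarith, by linarith⟩
  have hu2 : sin ((a+b)/2) < Real.sqrt 2 / 2 := by
    have := strictMonoOn_sin hmem1 hmem4 (by linarith)
    rwa [sin_pi_div_four] at this
  have hv2 : sin ((p+q)/2) < Real.sqrt 2 / 2 := by
    have := strictMonoOn_sin hmem2 hmem4 (by linarith)
    rwa [sin_pi_div_four] at this
  exact algFinal hsA hsB hsP hsQ hu hv hcA hcB hcP hcQ hu2 hv2 e1 e2

private lemma min_sin_le {c y d : ℝ} (h0 : 0 ≤ c) (hcy : c ≤ y) (hyd : y ≤ d) (hd : d ≤ π) :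
    sin c ≤ sin y ∨ sin d ≤ sin y := by
  rcases le_or_gt (c + y) π with h | h
  · left
    have hid := sin_sub_sin y c
    have h1 : 0 ≤ sin ((y - c)/2) :=
      sin_nonneg_of_nonneg_of_le_pi (by linarith) (by linarith)
    have h2 : 0 ≤ cos ((y + c)/2) :=
      cos_nonneg_of_mem_Icc ⟨by linarith [pi_pos], by linarith⟩
    nlinarith [mul_nonneg h1 h2]
  · right
    have hid := sin_sub_sin y d
    have h1 : sin ((y - d)/2) ≤ 0 := by
      apply sin_nonpos_of_nonpos_of_neg_pi_le (by linarith) (by linarith)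
    have h2 : cos ((y + d)/2) ≤ 0 := by
      apply cos_nonpos_of_pi_div_two_le_of_le (by linarith)
      linarith [pi_pos]
    nlinarith [hid, h1, h2]

private lemma circlePt_apply (O : EuclideanSpace ℝ (Fin 2)) (r t : ℝ) (m : Fin 2) :
    circlePt O r t m = O m + r * (![Real.cos t, Real.sin t] m) := rfl

private lemma dist_circlePt (O : EuclideanSpace ℝ (Fin 2)) {r : ℝ} (hr : 0 ≤ r) (α β : ℝ) :
    dist (circlePt O r α) (circlePt O r β) = 2 * r * |sin ((α - β)/2)| := by
  rw [EuclideanSpace.dist_eq]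
  rw [Fin.sum_univ_two]
  rw [Real.dist_eq, Real.dist_eq, circlePt_apply, circlePt_apply, circlePt_apply, circlePt_apply]
  simp only [Matrix.cons_val_zero, Matrix.cons_val_one, Matrix.head_cons]
  rw [sq_abs, sq_abs]
  have key : (O 0 + r * cos α - (O 0 + r * cos β))^2 + (O 1 + r * sin α - (O 1 + r * sin β))^2
      = (2 * r * |sin ((α - β)/2)|)^2 := by
    rw [mul_pow, mul_pow, sq_abs]
    have h1 : cos (α - β) = 1 - 2 * sin ((α - β)/2)^2 := by
      have hc := cos_two_mul ((α - β)/2)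
      have h2 := sin_sq_add_cos_sq ((α - β)/2)
      rw [show 2*((α - β)/2) = α - β by ring] at hc
      linarith
    have h3 := cos_sub α β
    have h4 := sin_sq_add_cos_sq α
    have h5 := sin_sq_add_cos_sq β
    nlinarith [h1, h3, h4, h5]
  rw [key, Real.sqrt_sq (by positivity)]

private lemma disk_dist_le {O : EuclideanSpace ℝ (Fin 2)} {r : ℝ} (hr : 0 < r)
    {A B C D : ℝ} {z : EuclideanSpace ℝ (Fin 2)}
    (h1 : z ∈ sideDisk O r A B) (h2 : z ∈ sideDisk O r C D)
    {a b y : ℝ} (haeq : a = (B - A)/4) (hbeq : b = (D - C)/4)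
    (hyeq : y = (C + D - A - B)/4)
    (ha : 0 ≤ a) (ha' : a ≤ π) (hb : 0 ≤ b) (hb' : b ≤ π) (hy : 0 ≤ y) (hy' : y ≤ π) :
    sin y ≤ sin a + sin b := by
  rw [sideDisk, Metric.mem_closedBall, dist_circlePt O hr.le,
    show ((A + B)/2 - A)/2 = a by rw [haeq]; ring,
    abs_of_nonneg (sin_nonneg_of_nonneg_of_le_pi ha ha')] at h1
  rw [sideDisk, Metric.mem_closedBall, dist_circlePt O hr.le,
    show ((C + D)/2 - C)/2 = b by rw [hbeq]; ring,
    abs_of_nonneg (sin_nonneg_of_nonneg_of_le_pi hb hb')] at h2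
  have hd : dist (circlePt O r ((C + D)/2)) (circlePt O r ((A + B)/2)) = 2*r*sin y := by
    rw [dist_circlePt O hr.le, show ((C + D)/2 - (A + B)/2)/2 = y by rw [hyeq]; ring,
      abs_of_nonneg (sin_nonneg_of_nonneg_of_le_pi hy hy')]
  have tri := dist_triangle (circlePt O r ((C + D)/2)) z (circlePt O r ((A + B)/2))
  rw [dist_comm (circlePt O r ((C + D)/2)) z] at tri
  nlinarith [h1, h2, hd, tri, hr]

/-- Marked points encoded as in the periodic-angle model. If the side disks of arcs `i`
and `j` intersect, then any side disk strictly between them on one side is disjoint from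
any side disk strictly between them on the other side. -/
theorem stmt_9 (O : EuclideanSpace ℝ (Fin 2)) (r : ℝ) (hr : 0 < r)
    (n : ℕ) (hn : 4 ≤ n) (θ : ℕ → ℝ) (hmono : StrictMono θ)
    (hper : ∀ m, θ (m + n) = θ m + 2 * π)
    (i k j l : ℕ) (hik : i < k) (hkj : k < j) (hjl : j < l) (hli : l < i + n)
    (hij : (sideDisk O r (θ i) (θ (i + 1)) ∩ sideDisk O r (θ j) (θ (j + 1))).Nonempty) :
    sideDisk O r (θ k) (θ (k + 1)) ∩ sideDisk O r (θ l) (θ (l + 1)) = ∅ := by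
  have hpi : (0:ℝ) < π := pi_pos
  have mono : Monotone θ := hmono.monotone
  -- basic ordering facts
  have h1i : θ i < θ (i+1) := hmono (by omega)
  have h1k : θ k < θ (k+1) := hmono (by omega)
  have h1j : θ j < θ (j+1) := hmono (by omega)
  have h1l : θ l < θ (l+1) := hmono (by omega)
  have g1 : θ (i+1) ≤ θ k := mono (by omega)
  have g2 : θ (k+1) ≤ θ j := mono (by omega)
  have g3 : θ (j+1) ≤ θ l := mono (by omega)
  have g4 : θ (l+1) ≤ θ (i+n) := mono (by omega)
  have hperi : θ (i+n) = θ i + 2*π := hper i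
  obtain ⟨a, hadef⟩ : ∃ x, x = (θ (i+1) - θ i)/4 := ⟨_, rfl⟩
  obtain ⟨b, hbdef⟩ : ∃ x, x = (θ (j+1) - θ j)/4 := ⟨_, rfl⟩
  obtain ⟨p, hpdef⟩ : ∃ x, x = (θ (k+1) - θ k)/4 := ⟨_, rfl⟩
  obtain ⟨q, hqdef⟩ : ∃ x, x = (θ (l+1) - θ l)/4 := ⟨_, rfl⟩
  obtain ⟨y, hydef⟩ : ∃ x, x = (θ j + θ (j+1) - θ i - θ (i+1))/4 := ⟨_, rfl⟩
  obtain ⟨x, hxdef⟩ : ∃ x', x' = (θ l + θ (l+1) - θ k - θ (k+1))/4 := ⟨_, rfl⟩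
  have ha0 : 0 < a := by rw [hadef]; linarith
  have hb0 : 0 < b := by rw [hbdef]; linarith
  have hp0 : 0 < p := by rw [hpdef]; linarith
  have hq0 : 0 < q := by rw [hqdef]; linarith
  have hsum : a + b + p + q ≤ π/2 := by
    rw [hadef, hbdef, hpdef, hqdef]; linarith
  have hy1 : a + b + 2*p ≤ y := by rw [hadef, hbdef, hpdef, hydef]; linarith
  have hy2 : y ≤ π - (a + b + 2*q) := by rw [hadef, hbdef, hqdef, hydef]; linarith
  have hx1 : p + q + 2*b ≤ x := by rw [hpdef, hqdef, hbdef, hxdef]; linarith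
  have hx2 : x ≤ π - (p + q + 2*a) := by rw [hpdef, hqdef, hadef, hxdef]; linarith
  -- hypothesis inequality
  obtain ⟨w, hw1, hw2⟩ := hij
  have hYsin : sin y ≤ sin a + sin b :=
    disk_dist_le hr hw1 hw2 hadef hbdef hydef
      ha0.le (by linarith) hb0.le (by linarith) (by linarith) (by linarith)
  have hYc : sin (a+b+2*p) ≤ sin a + sin b ∨ sin (a+b+2*q) ≤ sin a + sin b := by
    rcases min_sin_le (c := a+b+2*p) (d := π - (a+b+2*q)) (by linarith) hy1 (by linarith)
        (by linarith) with h | h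
    · exact Or.inl (le_trans h hYsin)
    · rw [sin_pi_sub] at h
      exact Or.inr (le_trans h hYsin)
  -- goal
  rw [Set.eq_empty_iff_forall_notMem]
  rintro z ⟨hz1, hz2⟩
  have hXsin : sin x ≤ sin p + sin q :=
    disk_dist_le hr hz1 hz2 hpdef hqdef hxdef
      hp0.le (by linarith) hq0.le (by linarith) (by linarith) (by linarith)
  have hXc : sin (p+q+2*b) ≤ sin p + sin q ∨ sin (p+q+2*a) ≤ sin p + sin q := by
    rcases min_sin_le (c := p+q+2*b) (d := π - (p+q+2*a)) (by linarith) hx1 (by linarith)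
        (by linarith) with h | h
    · exact Or.inl (le_trans h hXsin)
    · rw [sin_pi_sub] at h
      exact Or.inr (le_trans h hXsin)
  rcases hYc with hY | hY <;> rcases hXc with hX | hX
  · exact keyM hb0 ha0 hp0 hq0 (by linarith)
      (by rw [show b+a+2*p = a+b+2*p by ring]; linarith)
      (by linarith)
  · exact keyM ha0 hb0 hp0 hq0 (by linarith) hY hX
  · exact keyM hb0 ha0 hq0 hp0 (by linarith)
      (by rw [show b+a+2*q = a+b+2*q by ring]; linarith)
      (by rw [show q+p+2*b = p+q+2*b by ring]; linarith)
  · exact keyM ha0 hb0 hq0 hp0 (by linarith) hY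
      (by rw [show q+p+2*a = p+q+2*a by ring]; linarith)
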